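/- Operator norm of the contraction map of the Oja iteration. Let d > p ≥ 1 and λ_1 ≥ λ_2 ≥ … ≥ λ_d ≥ 0 with γ := λ_p − λ_{p+1} > 0; set Λ̄ := diag(λ_1,…,λ_p) and Λ̲ := diag(λ_{p+1},…,λ_d). Let η > 0 satisfy η·λ_1 ≤ 1, and define the linear map 𝓛 : ℝ^{(d−p)×p} → ℝ^{(d−p)×p} by 𝓛T := T + η(Λ̲T − TΛ̄). Then 𝓛T = L ∘ T, where L ∈ ℝ^{(d−p)×p} has entries L_{ij} = 1 + η(λ_{p+i} − λ_j) and ∘ is the entrywise product, and for ‖·‖ being either the spectral norm or the Frobenius norm, the induced operator norm sup_{T ≠ 0} ‖𝓛T‖/‖T‖ equals 1 − ηγ. -/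

import Mathlib

open Matrix

/-- Frobenius norm of a real matrix. -/
noncomputable def frobNorm {m n : ℕ} (A : Matrix (Fin m) (Fin n) ℝ) : ℝ :=
  Real.sqrt (∑ i, ∑ j, A i j ^ 2)

/-- Spectral norm (ℓ²-operator norm) of a real matrix. -/
noncomputable def specNorm {m n : ℕ} (A : Matrix (Fin m) (Fin n) ℝ) : ℝ :=
  sSup {c : ℝ | ∃ x : Fin n → ℝ, ∑ j, x j ^ 2 ≤ 1 ∧ c = Real.sqrt (∑ i, (A.mulVec x) i ^ 2)}

namespace OjaAux

noncomputable def en {n : ℕ} (x : Fin n → ℝ) : ℝ := Real.sqrt (∑ j, x j ^ 2)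

lemma en_nonneg {n : ℕ} (x : Fin n → ℝ) : 0 ≤ en x := Real.sqrt_nonneg _

lemma sq_en {n : ℕ} (x : Fin n → ℝ) : en x ^ 2 = ∑ j, x j ^ 2 :=
  Real.sq_sqrt (Finset.sum_nonneg fun _ _ => sq_nonneg _)

lemma en_eq_norm {n : ℕ} (x : Fin n → ℝ) :
    en x = ‖(WithLp.equiv 2 (Fin n → ℝ)).symm x‖ := by
  rw [EuclideanSpace.norm_eq]
  simp [en, Real.norm_eq_abs, sq_abs]

lemma en_add_le {n : ℕ} (x y : Fin n → ℝ) : en (x + y) ≤ en x + en y := by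
  rw [en_eq_norm, en_eq_norm, en_eq_norm, WithLp.equiv_symm_apply, WithLp.toLp_add]
  exact norm_add_le _ _

lemma en_smul {n : ℕ} (c : ℝ) (x : Fin n → ℝ) : en (c • x) = |c| * en x := by
  rw [en_eq_norm, en_eq_norm, WithLp.equiv_symm_apply, WithLp.toLp_smul, norm_smul, Real.norm_eq_abs]

lemma en_zero {n : ℕ} : en (0 : Fin n → ℝ) = 0 := by simp [en]

lemma zero_mem_specSet {m n : ℕ} (A : Matrix (Fin m) (Fin n) ℝ) :
    (0:ℝ) ∈ {c : ℝ | ∃ x : Fin n → ℝ, ∑ j, x j ^ 2 ≤ 1 ∧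
      c = Real.sqrt (∑ i, (A.mulVec x) i ^ 2)} := by
  refine ⟨0, by simp, ?_⟩
  simp [Matrix.mulVec_zero]

lemma specSet_bddAbove {m n : ℕ} (A : Matrix (Fin m) (Fin n) ℝ) :
    BddAbove {c : ℝ | ∃ x : Fin n → ℝ, ∑ j, x j ^ 2 ≤ 1 ∧
      c = Real.sqrt (∑ i, (A.mulVec x) i ^ 2)} := by
  refine ⟨Real.sqrt (∑ i, ∑ j, A i j ^ 2), ?_⟩
  rintro c ⟨x, hx, rfl⟩
  apply Real.sqrt_le_sqrt
  have : ∀ i, (A.mulVec x) i ^ 2 ≤ (∑ j, A i j ^ 2) := by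
    intro i
    calc (A.mulVec x) i ^ 2 = (∑ j, A i j * x j) ^ 2 := by rfl
      _ ≤ (∑ j, A i j ^ 2) * ∑ j, x j ^ 2 := Finset.sum_mul_sq_le_sq_mul_sq _ _ _
      _ ≤ (∑ j, A i j ^ 2) * 1 := by
          apply mul_le_mul_of_nonneg_left hx (Finset.sum_nonneg fun _ _ => sq_nonneg _)
      _ = ∑ j, A i j ^ 2 := mul_one _
  exact Finset.sum_le_sum fun i _ => this i

lemma specNorm_nonneg {m n : ℕ} (A : Matrix (Fin m) (Fin n) ℝ) : 0 ≤ specNorm A :=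
  le_csSup (specSet_bddAbove A) (zero_mem_specSet A)

lemma le_specNorm {m n : ℕ} (A : Matrix (Fin m) (Fin n) ℝ) (x : Fin n → ℝ)
    (hx : ∑ j, x j ^ 2 ≤ 1) : en (A.mulVec x) ≤ specNorm A :=
  le_csSup (specSet_bddAbove A) ⟨x, hx, rfl⟩

lemma specNorm_le {m n : ℕ} (A : Matrix (Fin m) (Fin n) ℝ) (c : ℝ)
    (h : ∀ x : Fin n → ℝ, ∑ j, x j ^ 2 ≤ 1 → en (A.mulVec x) ≤ c) :
    specNorm A ≤ c := by
  apply csSup_le ⟨0, zero_mem_specSet A⟩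
  rintro b ⟨x, hx, rfl⟩
  exact h x hx

lemma en_mulVec_le {m n : ℕ} (A : Matrix (Fin m) (Fin n) ℝ) (x : Fin n → ℝ) :
    en (A.mulVec x) ≤ specNorm A * en x := by
  rcases eq_or_ne (en x) 0 with h | h
  · have hx : x = 0 := by
      have : ∑ j, x j ^ 2 = 0 := by
        have := sq_en x; rw [h] at this; simpa using this.symm
      funext j
      have h2 : x j ^ 2 = 0 :=
        (Finset.sum_eq_zero_iff_of_nonneg (fun i _ => sq_nonneg (x i))).1 this j
          (Finset.mem_univ j)
      exact pow_eq_zero_iff (two_ne_zero) |>.1 h2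
    simp [hx, Matrix.mulVec_zero, en_zero, h]
  · have hpos : 0 < en x := lt_of_le_of_ne (en_nonneg x) (Ne.symm h)
    set y : Fin n → ℝ := (en x)⁻¹ • x with hy
    have hy1 : ∑ j, y j ^ 2 ≤ 1 := by
      have heny : en y = 1 := by
        rw [hy, en_smul, abs_of_pos (inv_pos.2 hpos), inv_mul_cancel₀ h]
      rw [← sq_en, heny]; norm_num
    have h1 : en (A.mulVec y) ≤ specNorm A := le_specNorm A y hy1
    have h2 : A.mulVec y = (en x)⁻¹ • A.mulVec x := Matrix.mulVec_smul A _ x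
    rw [h2, en_smul, abs_of_pos (inv_pos.2 hpos)] at h1
    calc en (A.mulVec x) = en x * ((en x)⁻¹ * en (A.mulVec x)) := by
          field_simp
      _ ≤ en x * specNorm A := by
          apply mul_le_mul_of_nonneg_left h1 (le_of_lt hpos)
      _ = specNorm A * en x := mul_comm _ _

lemma en_diag_mulVec_le {n : ℕ} (dv : Fin n → ℝ) (c : ℝ) (hc0 : 0 ≤ c)
    (hc : ∀ i, |dv i| ≤ c) (x : Fin n → ℝ) :
    en ((Matrix.diagonal dv).mulVec x) ≤ c * en x := by
  have h1 : ∀ i, ((Matrix.diagonal dv).mulVec x) i ^ 2 ≤ c ^ 2 * x i ^ 2 := by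
    intro i
    rw [Matrix.mulVec_diagonal, mul_pow]
    have : dv i ^ 2 ≤ c ^ 2 := by
      calc dv i ^ 2 = |dv i| ^ 2 := (sq_abs _).symm
        _ ≤ c ^ 2 := pow_le_pow_left₀ (abs_nonneg _) (hc i) 2
    exact mul_le_mul_of_nonneg_right this (sq_nonneg _)
  calc en ((Matrix.diagonal dv).mulVec x)
      ≤ Real.sqrt (∑ i, c ^ 2 * x i ^ 2) :=
        Real.sqrt_le_sqrt (Finset.sum_le_sum fun i _ => h1 i)
    _ = c * en x := by
        rw [← Finset.mul_sum, Real.sqrt_mul (sq_nonneg c), Real.sqrt_sq hc0]; rfl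

end OjaAux

namespace OjaAux2
open OjaAux MeasureTheory

lemma sum_mul_le_en {n : ℕ} (v w : Fin n → ℝ) : ∑ i, v i * w i ≤ en v * en w := by
  have h := Finset.sum_mul_sq_le_sq_mul_sq Finset.univ v w
  have h2 : ∑ i, v i * w i ≤ |∑ i, v i * w i| := le_abs_self _
  have h3 : |∑ i, v i * w i| = Real.sqrt ((∑ i, v i * w i) ^ 2) := (Real.sqrt_sq_eq_abs _).symm
  rw [h3] at h2
  refine h2.trans ?_
  rw [en, en, ← Real.sqrt_mul (by positivity)]
  exact Real.sqrt_le_sqrt h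

lemma matrix_exists_ne (A : Matrix (Fin 1) (Fin 1) ℝ) : True := trivial

lemma exists_entry_ne {m n : ℕ} (A : Matrix (Fin m) (Fin n) ℝ) (hA : A ≠ 0) :
    ∃ i j, A i j ≠ 0 := by
  by_contra h; push_neg at h
  exact hA (by ext i j; simpa using h i j)

lemma single_sq_sum {n : ℕ} (j : Fin n) : ∑ jj, (Pi.single j 1 : Fin n → ℝ) jj ^ 2 = 1 := by
  simp [Pi.single_apply, ite_pow]

lemma specNorm_pos{m n : ℕ} (A : Matrix (Fin m) (Fin n) ℝ) (hA : A ≠ 0) :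
    0 < specNorm A := by
  obtain ⟨i, j, hij⟩ := exists_entry_ne A hA
  have h1 : en (A.mulVec (Pi.single j 1)) ≤ specNorm A :=
    le_specNorm _ _ (le_of_eq (single_sq_sum j))
  have h2 : |A i j| ≤ en (A.mulVec (Pi.single j 1)) := by
    rw [Matrix.mulVec_single]
    calc |A i j| = Real.sqrt ((A i j * 1) ^ 2) := by rw [mul_one, Real.sqrt_sq_eq_abs]
      _ ≤ en (fun i2 => A i2 j * 1) :=
          Real.sqrt_le_sqrt (Finset.single_le_sum
            (f := fun i2 => (A i2 j * 1) ^ 2) (fun _ _ => sq_nonneg _) (Finset.mem_univ i))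
  have := abs_pos.2 hij
  linarith

lemma frobNorm_nonneg {m n : ℕ} (A : Matrix (Fin m) (Fin n) ℝ) : 0 ≤ frobNorm A :=
  Real.sqrt_nonneg _

lemma frobNorm_pos {m n : ℕ} (A : Matrix (Fin m) (Fin n) ℝ) (hA : A ≠ 0) :
    0 < frobNorm A := by
  obtain ⟨i, j, hij⟩ := exists_entry_ne A hA
  have h2 : |A i j| ≤ frobNorm A := by
    calc |A i j| = Real.sqrt ((A i j) ^ 2) := (Real.sqrt_sq_eq_abs _).symm
      _ ≤ frobNorm A := by
          apply Real.sqrt_le_sqrt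
          calc A i j ^ 2 ≤ ∑ jj, A i jj ^ 2 :=
              Finset.single_le_sum (f := fun jj => A i jj ^ 2)
                (fun _ _ => sq_nonneg _) (Finset.mem_univ j)
            _ ≤ ∑ ii, ∑ jj, A ii jj ^ 2 :=
              Finset.single_le_sum (f := fun ii => ∑ jj, A ii jj ^ 2)
                (fun _ _ => Finset.sum_nonneg fun _ _ => sq_nonneg _) (Finset.mem_univ i)
  have := abs_pos.2 hij
  linarith

lemma mulVec_single_matrix {m n : ℕ} (i0 : Fin m) (j0 : Fin n) (c : ℝ) (x : Fin n → ℝ) :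
    (Matrix.of fun i j => if i = i0 ∧ j = j0 then c else 0).mulVec x
      = fun i => if i = i0 then c * x j0 else 0 := by
  funext i
  by_cases hi : i = i0 <;>
    simp [Matrix.mulVec, dotProduct, hi, ite_and, ite_mul, Finset.sum_ite_eq']

lemma en_single_like {m : ℕ} (i0 : Fin m) (a : ℝ) :
    en (fun i => if i = i0 then a else 0) = |a| := by
  rw [en]
  simp [ite_pow, Finset.sum_ite_eq', Real.sqrt_sq_eq_abs]

lemma specNorm_single {m n : ℕ} (i0 : Fin m) (j0 : Fin n) (c : ℝ) :
    specNorm (Matrix.of fun i j => if i = i0 ∧ j = j0 then c else 0) = |c| := by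
  apply le_antisymm
  · apply specNorm_le _ _ (fun x hx => ?_)
    rw [mulVec_single_matrix, en_single_like, abs_mul]
    have hxj : |x j0| ≤ 1 := by
      have h1 : x j0 ^ 2 ≤ 1 := le_trans (Finset.single_le_sum
        (f := fun j => x j ^ 2) (fun _ _ => sq_nonneg _) (Finset.mem_univ j0)) hx
      calc |x j0| = Real.sqrt (x j0 ^ 2) := (Real.sqrt_sq_eq_abs _).symm
        _ ≤ Real.sqrt 1 := Real.sqrt_le_sqrt h1
        _ = 1 := Real.sqrt_one
    calc |c| * |x j0| ≤ |c| * 1 := mul_le_mul_of_nonneg_left hxj (abs_nonneg _)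
      _ = |c| := mul_one _
  · have h := le_specNorm (Matrix.of fun i j => if i = i0 ∧ j = j0 then c else 0)
      (Pi.single j0 1) (le_of_eq (single_sq_sum j0))
    rwa [show ((Matrix.of fun i j => if i = i0 ∧ j = j0 then c else 0).mulVec
        (Pi.single j0 1)) = fun i => if i = i0 then c else 0 by
        rw [mulVec_single_matrix]; simp, en_single_like] at h

lemma frobNorm_single {m n : ℕ} (i0 : Fin m) (j0 : Fin n) (c : ℝ) :
    frobNorm (Matrix.of fun i j => if i = i0 ∧ j = j0 then c else 0) = |c| := by
  rw [frobNorm]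
  simp [ite_and, ite_pow, Finset.sum_ite_eq', Real.sqrt_sq_eq_abs]

end OjaAux2

namespace OjaAux3
open OjaAux OjaAux2 MeasureTheory

lemma hind (a b c : ℝ) : Integrable (Set.indicator (Set.Ico a b) (fun _ => c)) := by
  rw [integrable_indicator_iff measurableSet_Ico]
  exact integrableOn_const (by rw [Real.volume_Ico]; exact ENNReal.ofReal_ne_top)

lemma hint (a b c : ℝ) (hab : a ≤ b) :
    ∫ θ, Set.indicator (Set.Ico a b) (fun _ => c) θ = (b - a) * c := by
  rw [integral_indicator_const c measurableSet_Ico, Real.volume_real_Ico_of_le hab, smul_eq_mul]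

lemma bilinear_bound {m n : ℕ} (T : Matrix (Fin m) (Fin n) ℝ)
    (s : Fin m → ℝ) (t : Fin n → ℝ) (K tstar sstar : ℝ) (hK0 : 0 ≤ K)
    (hts : ∀ j, tstar ≤ t j) (hss : ∀ i, s i ≤ sstar) (hst : ∀ i j, t j ≤ s i)
    (htt : ∀ i, tstar ≤ s i) (hts2 : ∀ j, t j ≤ sstar)
    (hK1 : ∀ i, s i - tstar ≤ K) (hK2 : ∀ j, sstar - t j ≤ K)
    (u : Fin m → ℝ) (x : Fin n → ℝ) (hu : ∑ i, u i ^ 2 ≤ 1) (hx : ∑ j, x j ^ 2 ≤ 1) :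
    ∑ i, ∑ j, u i * ((s i - t j) * T i j) * x j ≤ K * specNorm T := by
  classical
  have hsT0 : 0 ≤ specNorm T := specNorm_nonneg T
  set sT := specNorm T with hsTdef
  set uf : ℝ → Fin m → ℝ :=
    fun θ i => Set.indicator (Set.Ico tstar (s i)) (fun _ => u i) θ with huf
  set xf : ℝ → Fin n → ℝ :=
    fun θ j => Set.indicator (Set.Ico (t j) sstar) (fun _ => x j) θ with hxf
  set F : ℝ → ℝ := fun θ =>
    ∑ i, ∑ j, Set.indicator (Set.Ico (t j) (s i)) (fun _ => u i * T i j * x j) θ with hF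
  set ga : ℝ → ℝ :=
    fun θ => ∑ i, Set.indicator (Set.Ico tstar (s i)) (fun _ => u i ^ 2) θ with hga
  set gb : ℝ → ℝ :=
    fun θ => ∑ j, Set.indicator (Set.Ico (t j) sstar) (fun _ => x j ^ 2) θ with hgb
  set ψ : ℝ → ℝ := fun θ => sT * ((ga θ + gb θ) / 2) with hψ
  have hFint : Integrable F :=
    integrable_finset_sum _ (fun i _ => integrable_finset_sum _ (fun j _ => hind _ _ _))
  have hgaint : Integrable ga := integrable_finset_sum _ (fun i _ => hind _ _ _)
  have hgbint : Integrable gb := integrable_finset_sum _ (fun j _ => hind _ _ _)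
  have hψint : Integrable ψ := (((hgaint.add hgbint).div_const 2).const_mul sT)
  have hFval : ∫ θ, F θ = ∑ i, ∑ j, u i * ((s i - t j) * T i j) * x j := by
    rw [integral_finset_sum _ (fun i _ => integrable_finset_sum _ (fun j _ => hind _ _ _))]
    refine Finset.sum_congr rfl (fun i _ => ?_)
    rw [integral_finset_sum _ (fun j _ => hind _ _ _)]
    refine Finset.sum_congr rfl (fun j _ => ?_)
    rw [hint _ _ _ (hst i j)]; ring
  have hFpt : ∀ θ, F θ = ∑ i, uf θ i * (T.mulVec (xf θ)) i := by
    intro θ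
    refine Finset.sum_congr rfl (fun i _ => ?_)
    have hmv : (T.mulVec (xf θ)) i = ∑ j, T i j * xf θ j := rfl
    rw [hmv, Finset.mul_sum]
    refine Finset.sum_congr rfl (fun j _ => ?_)
    have e1 : θ ∈ Set.Ico (t j) (s i) ↔
        (θ ∈ Set.Ico tstar (s i) ∧ θ ∈ Set.Ico (t j) sstar) := by
      simp only [Set.mem_Ico]
      constructor
      · rintro ⟨ha, hb⟩
        exact ⟨⟨le_trans (hts j) ha, hb⟩, ⟨ha, lt_of_lt_of_le hb (hss i)⟩⟩
      · rintro ⟨⟨_, hb⟩, ⟨ha, _⟩⟩; exact ⟨ha, hb⟩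
    simp only [huf, hxf]
    rw [Set.indicator_apply, Set.indicator_apply, Set.indicator_apply, if_congr e1 rfl rfl]
    by_cases h1 : θ ∈ Set.Ico tstar (s i) <;> by_cases h2 : θ ∈ Set.Ico (t j) sstar <;>
      simp [h1, h2] <;> ring
  have hgapt : ∀ θ, en (uf θ) ^ 2 = ga θ := by
    intro θ
    rw [sq_en]
    refine Finset.sum_congr rfl (fun i _ => ?_)
    by_cases h : θ ∈ Set.Ico tstar (s i)
    · simp [huf, Set.indicator_of_mem h]
    · simp [huf, Set.indicator_of_notMem h]
  have hgbpt : ∀ θ, en (xf θ) ^ 2 = gb θ := by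
    intro θ
    rw [sq_en]
    refine Finset.sum_congr rfl (fun j _ => ?_)
    by_cases h : θ ∈ Set.Ico (t j) sstar
    · simp [hxf, Set.indicator_of_mem h]
    · simp [hxf, Set.indicator_of_notMem h]
  have hFle : ∀ θ, F θ ≤ ψ θ := by
    intro θ
    have h1 : F θ ≤ en (uf θ) * en (T.mulVec (xf θ)) := by
      rw [hFpt θ]; exact sum_mul_le_en _ _
    have h2 : en (T.mulVec (xf θ)) ≤ sT * en (xf θ) := en_mulVec_le T (xf θ)
    have h3 : F θ ≤ sT * (en (uf θ) * en (xf θ)) := by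
      calc F θ ≤ en (uf θ) * en (T.mulVec (xf θ)) := h1
        _ ≤ en (uf θ) * (sT * en (xf θ)) :=
            mul_le_mul_of_nonneg_left h2 (en_nonneg _)
        _ = sT * (en (uf θ) * en (xf θ)) := by ring
    have h4 : en (uf θ) * en (xf θ) ≤ (ga θ + gb θ) / 2 := by
      rw [← hgapt θ, ← hgbpt θ]
      nlinarith [sq_nonneg (en (uf θ) - en (xf θ))]
    calc F θ ≤ sT * (en (uf θ) * en (xf θ)) := h3
      _ ≤ sT * ((ga θ + gb θ) / 2) := mul_le_mul_of_nonneg_left h4 hsT0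
      _ = ψ θ := rfl
  have hgaK : ∫ θ, ga θ ≤ K := by
    have hgaval : ∫ θ, ga θ = ∑ i, (s i - tstar) * u i ^ 2 := by
      rw [integral_finset_sum _ (fun i _ => hind _ _ _)]
      exact Finset.sum_congr rfl (fun i _ => hint _ _ _ (htt i))
    rw [hgaval]
    calc ∑ i, (s i - tstar) * u i ^ 2 ≤ ∑ i, K * u i ^ 2 :=
        Finset.sum_le_sum (fun i _ => mul_le_mul_of_nonneg_right (hK1 i) (sq_nonneg _))
      _ = K * ∑ i, u i ^ 2 := (Finset.mul_sum _ _ _).symm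
      _ ≤ K * 1 := mul_le_mul_of_nonneg_left hu hK0
      _ = K := mul_one _
  have hgbK : ∫ θ, gb θ ≤ K := by
    have hgbval : ∫ θ, gb θ = ∑ j, (sstar - t j) * x j ^ 2 := by
      rw [integral_finset_sum _ (fun j _ => hind _ _ _)]
      exact Finset.sum_congr rfl (fun j _ => hint _ _ _ (hts2 j))
    rw [hgbval]
    calc ∑ j, (sstar - t j) * x j ^ 2 ≤ ∑ j, K * x j ^ 2 :=
        Finset.sum_le_sum (fun j _ => mul_le_mul_of_nonneg_right (hK2 j) (sq_nonneg _))
      _ = K * ∑ j, x j ^ 2 := (Finset.mul_sum _ _ _).symm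
      _ ≤ K * 1 := mul_le_mul_of_nonneg_left hx hK0
      _ = K := mul_one _
  have hψval : ∫ θ, ψ θ ≤ K * sT := by
    have heq : ∫ θ, ψ θ = sT * (((∫ θ, ga θ) + (∫ θ, gb θ)) / 2) := by
      rw [hψ]
      rw [MeasureTheory.integral_const_mul, integral_div, integral_add hgaint hgbint]
    rw [heq]
    have hsum : (∫ θ, ga θ) + (∫ θ, gb θ) ≤ K + K := add_le_add hgaK hgbK
    have h5 : sT * (((∫ θ, ga θ) + (∫ θ, gb θ)) / 2) ≤ sT * ((K + K) / 2) :=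
      mul_le_mul_of_nonneg_left (by linarith) hsT0
    calc sT * (((∫ θ, ga θ) + (∫ θ, gb θ)) / 2) ≤ sT * ((K + K) / 2) := h5
      _ = K * sT := by ring
  calc ∑ i, ∑ j, u i * ((s i - t j) * T i j) * x j = ∫ θ, F θ := hFval.symm
    _ ≤ ∫ θ, ψ θ := integral_mono hFint hψint hFle
    _ ≤ K * sT := hψval

end OjaAux3

namespace OjaAux4
open OjaAux OjaAux2 OjaAux3

lemma hadamard_spec_bound {m n : ℕ} (B T : Matrix (Fin m) (Fin n) ℝ)
    (s : Fin m → ℝ) (t : Fin n → ℝ) (K tstar sstar : ℝ) (hK0 : 0 ≤ K)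
    (hts : ∀ j, tstar ≤ t j) (hss : ∀ i, s i ≤ sstar) (hst : ∀ i j, t j ≤ s i)
    (htt : ∀ i, tstar ≤ s i) (hts2 : ∀ j, t j ≤ sstar)
    (hK1 : ∀ i, s i - tstar ≤ K) (hK2 : ∀ j, sstar - t j ≤ K)
    (hB : ∀ i j, B i j = (s i - t j) * T i j) :
    specNorm B ≤ K * specNorm T := by
  apply specNorm_le
  intro x hx
  set v := B.mulVec x with hv
  rcases eq_or_ne (en v) 0 with h | h
  · rw [h]; exact mul_nonneg hK0 (specNorm_nonneg T)
  · have hpos : 0 < en v := lt_of_le_of_ne (en_nonneg v) (Ne.symm h)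
    set u : Fin m → ℝ := (en v)⁻¹ • v with hu
    have hu1 : ∑ i, u i ^ 2 ≤ 1 := by
      have heny : en u = 1 := by
        rw [hu, en_smul, abs_of_pos (inv_pos.2 hpos), inv_mul_cancel₀ h]
      rw [← sq_en, heny]; norm_num
    have hsum : ∑ i, u i * v i = en v := by
      have h1 : ∀ i, u i * v i = (en v)⁻¹ * v i ^ 2 := by
        intro i; rw [hu]; simp only [Pi.smul_apply, smul_eq_mul]; ring
      rw [Finset.sum_congr rfl (fun i _ => h1 i), ← Finset.mul_sum, ← sq_en, sq]
      field_simp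
    have hexp : ∑ i, u i * v i = ∑ i, ∑ j, u i * ((s i - t j) * T i j) * x j := by
      refine Finset.sum_congr rfl fun i _ => ?_
      have h2 : v i = ∑ j, B i j * x j := rfl
      rw [h2, Finset.mul_sum]
      exact Finset.sum_congr rfl fun j _ => by rw [hB]; ring
    have hb := bilinear_bound T s t K tstar sstar hK0 hts hss hst htt hts2 hK1 hK2 u x hu1 hx
    rw [← hexp, hsum] at hb
    exact hb

end OjaAux4

open OjaAux OjaAux2 OjaAux3 OjaAux4 in
/-- Operator norm of the contraction map `𝓛T = T + η(Λ̲T − TΛ̄)` of the Oja iteration: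
`𝓛` acts as the Hadamard product with the matrix `L_{ij} = 1 + η(λ_{p+i} − λ_j)`, and
its operator norm induced by either the spectral or the Frobenius norm equals `1 − ηγ`. -/
theorem oja_contraction_operator_norm (d p : ℕ) (hp : 1 ≤ p) (hpd : p < d)
    (lam : Fin d → ℝ) (hmono : Antitone lam) (hpos : ∀ i, 0 ≤ lam i)
    (hgap : lam ⟨p, hpd⟩ < lam ⟨p - 1, by omega⟩)
    (η : ℝ) (hη : 0 < η) (hetaLam : η * lam ⟨0, by omega⟩ ≤ 1) :
    let γ : ℝ := lam ⟨p - 1, by omega⟩ - lam ⟨p, hpd⟩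
    let calL : Matrix (Fin (d - p)) (Fin p) ℝ → Matrix (Fin (d - p)) (Fin p) ℝ :=
      fun T => T + η •
        (Matrix.diagonal (fun i : Fin (d - p) => lam ⟨p + i, by have := i.isLt; omega⟩) * T
          - T * Matrix.diagonal (fun j : Fin p => lam (Fin.castLE hpd.le j)))
    (∀ (T : Matrix (Fin (d - p)) (Fin p) ℝ) (i : Fin (d - p)) (j : Fin p),
        calL T i j =
          (1 + η * (lam ⟨p + i, by have := i.isLt; omega⟩ - lam (Fin.castLE hpd.le j))) * T i j) ∧
    IsGreatest {c : ℝ | ∃ T : Matrix (Fin (d - p)) (Fin p) ℝ,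
        T ≠ 0 ∧ c = specNorm (calL T) / specNorm T} (1 - η * γ) ∧
    IsGreatest {c : ℝ | ∃ T : Matrix (Fin (d - p)) (Fin p) ℝ,
        T ≠ 0 ∧ c = frobNorm (calL T) / frobNorm T} (1 - η * γ) := by
  intro γ calL
  have hγ : γ = lam ⟨p - 1, by omega⟩ - lam ⟨p, hpd⟩ := rfl
  set a := lam ⟨p, hpd⟩ with ha
  set b := lam (⟨p - 1, by omega⟩ : Fin d) with hb
  have hab : a < b := hgap
  have ha0 : 0 ≤ a := hpos _
  have hlam0 : ∀ i : Fin d, lam i ≤ lam ⟨0, by omega⟩ :=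
    fun i => hmono (by simp [Fin.le_def])
  have hηlam : ∀ i : Fin d, η * lam i ≤ 1 :=
    fun i => le_trans (mul_le_mul_of_nonneg_left (hlam0 i) hη.le) hetaLam
  have hetab : η * b ≤ 1 := hηlam _
  have hK0 : 0 ≤ 1 - η * γ := by
    rw [hγ]
    nlinarith [mul_nonneg hη.le ha0]
  -- entrywise formula
  have hform : ∀ (T : Matrix (Fin (d - p)) (Fin p) ℝ) (i : Fin (d - p)) (j : Fin p),
      calL T i j = (1 + η * (lam ⟨p + i, by have := i.isLt; omega⟩
        - lam (Fin.castLE hpd.le j))) * T i j := by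
    intro T i j
    simp only [calL, Matrix.add_apply, Matrix.smul_apply, Matrix.sub_apply,
      Matrix.diagonal_mul, Matrix.mul_diagonal, smul_eq_mul]
    ring
  -- index bounds
  have hμ : ∀ i : Fin (d - p), lam ⟨p + i, by have := i.isLt; omega⟩ ≤ a :=
    fun i => hmono (by simp [Fin.le_def])
  have hμ0 : ∀ i : Fin (d - p), 0 ≤ lam ⟨p + i, by have := i.isLt; omega⟩ :=
    fun i => hpos _
  have hν : ∀ j : Fin p, b ≤ lam (Fin.castLE hpd.le j) := by
    intro j
    apply hmono
    simp only [Fin.le_def, Fin.coe_castLE]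
    have := j.isLt
    omega
  -- coefficient bounds
  have hcoefK : ∀ (i : Fin (d - p)) (j : Fin p),
      1 + η * (lam ⟨p + i, by have := i.isLt; omega⟩ - lam (Fin.castLE hpd.le j))
        ≤ 1 - η * γ := by
    intro i j
    rw [hγ]
    have h1 := hμ i
    have h2 := hν j
    nlinarith [hη.le]
  have hcoef0 : ∀ (i : Fin (d - p)) (j : Fin p),
      0 ≤ 1 + η * (lam ⟨p + i, by have := i.isLt; omega⟩ - lam (Fin.castLE hpd.le j)) := by
    intro i j
    have h1 := hηlam (Fin.castLE hpd.le j)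
    have h2 := mul_nonneg hη.le (hμ0 i)
    nlinarith
  -- the extremal matrix
  have hdp : 0 < d - p := by omega
  set i0 : Fin (d - p) := ⟨0, hdp⟩ with hi0
  set j0 : Fin p := ⟨p - 1, by omega⟩ with hj0
  set T0 : Matrix (Fin (d - p)) (Fin p) ℝ :=
    Matrix.of fun i j => if i = i0 ∧ j = j0 then (1 : ℝ) else 0 with hT0
  have hT0ne : T0 ≠ 0 := by
    intro h
    have h2 : T0 i0 j0 = 0 := by rw [h]; rfl
    rw [hT0] at h2
    simp at h2
  have hcalLT0 : calL T0 =
      Matrix.of fun i j => if i = i0 ∧ j = j0 then (1 - η * γ) else 0 := by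
    ext i j
    rw [hform]
    by_cases hij : i = i0 ∧ j = j0
    · obtain ⟨hi, hj⟩ := hij
      subst hi; subst hj
      have e1 : lam ⟨p + (i0 : ℕ), by have := i0.isLt; omega⟩ = a := by
        rw [ha]; exact congrArg lam (Fin.ext (by simp [hi0]))
      have e2 : lam (Fin.castLE hpd.le j0) = b := by
        rw [hb]; exact congrArg lam (Fin.ext (by simp [hj0]))
      rw [e1, e2]
      simp only [hT0, Matrix.of_apply, and_self, if_true, eq_self_iff_true]
      rw [hγ]
      ring
    · simp only [hT0, Matrix.of_apply, if_neg hij]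
      ring
  -- spectral norm values at T0
  have hspecT0 : specNorm T0 = 1 := by rw [hT0, specNorm_single]; simp
  have hspecLT0 : specNorm (calL T0) = 1 - η * γ := by
    rw [hcalLT0, specNorm_single, abs_of_nonneg hK0]
  have hfrobT0 : frobNorm T0 = 1 := by rw [hT0, frobNorm_single]; simp
  have hfrobLT0 : frobNorm (calL T0) = 1 - η * γ := by
    rw [hcalLT0, frobNorm_single, abs_of_nonneg hK0]
  -- spectral upper bound
  have hspecUB : ∀ T : Matrix (Fin (d - p)) (Fin p) ℝ,
      specNorm (calL T) ≤ (1 - η * γ) * specNorm T := by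
    intro T
    apply hadamard_spec_bound (calL T) T
      (fun i => 1 + η * lam ⟨p + i, by have := i.isLt; omega⟩)
      (fun j => η * lam (Fin.castLE hpd.le j))
      (1 - η * γ) (η * b) (1 + η * a) hK0
    · intro j; exact mul_le_mul_of_nonneg_left (hν j) hη.le
    · intro i
      have := hμ i
      nlinarith [hη.le]
    · intro i j
      have h1 := hηlam (Fin.castLE hpd.le j)
      have h2 := mul_nonneg hη.le (hμ0 i)
      linarith
    · intro i
      have h2 := mul_nonneg hη.le (hμ0 i)
      linarith
    · intro j
      have h1 := hηlam (Fin.castLE hpd.le j)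
      have h2 := mul_nonneg hη.le ha0
      linarith
    · intro i
      rw [hγ]
      have := hμ i
      nlinarith [hη.le]
    · intro j
      rw [hγ]
      have := hν j
      nlinarith [hη.le]
    · intro i j
      rw [hform]
      ring
  -- Frobenius upper bound
  have hfrobUB : ∀ T : Matrix (Fin (d - p)) (Fin p) ℝ,
      frobNorm (calL T) ≤ (1 - η * γ) * frobNorm T := by
    intro T
    rw [frobNorm, frobNorm]
    have hsum : ∑ i, ∑ j, (calL T) i j ^ 2 ≤ (1 - η * γ) ^ 2 * ∑ i, ∑ j, T i j ^ 2 := by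
      rw [Finset.mul_sum]
      refine Finset.sum_le_sum fun i _ => ?_
      rw [Finset.mul_sum]
      refine Finset.sum_le_sum fun j _ => ?_
      rw [hform, mul_pow]
      have h1 := hcoefK i j
      have h2 := hcoef0 i j
      have h3 : (1 + η * (lam ⟨p + i, by have := i.isLt; omega⟩
          - lam (Fin.castLE hpd.le j))) ^ 2 ≤ (1 - η * γ) ^ 2 :=
        pow_le_pow_left₀ h2 h1 2
      exact mul_le_mul_of_nonneg_right h3 (sq_nonneg _)
    calc Real.sqrt (∑ i, ∑ j, (calL T) i j ^ 2)
        ≤ Real.sqrt ((1 - η * γ) ^ 2 * ∑ i, ∑ j, T i j ^ 2) := Real.sqrt_le_sqrt hsum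
      _ = (1 - η * γ) * Real.sqrt (∑ i, ∑ j, T i j ^ 2) := by
          rw [Real.sqrt_mul (sq_nonneg _), Real.sqrt_sq hK0]
  refine ⟨hform, ⟨⟨T0, hT0ne, ?_⟩, ?_⟩, ⟨⟨T0, hT0ne, ?_⟩, ?_⟩⟩
  · rw [hspecLT0, hspecT0, div_one]
  · rintro c ⟨T, hT, rfl⟩
    rw [div_le_iff₀ (specNorm_pos T hT)]
    exact hspecUB T
  · rw [hfrobLT0, hfrobT0, div_one]
  · rintro c ⟨T, hT, rfl⟩
    rw [div_le_iff₀ (frobNorm_pos T hT)]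
    exact hfrobUB T
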